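/- Let R be a root system with a ℤ/m-grading (R_j)_{j∈ℤ/m}. For y, y' ∈ Y with (y,α) ≠ 1 ≠ (y',α) for all α ∈ R_1, write y ≈ y' if ((y,α)−1)((y',α)−1) > 0 for every α ∈ R_1, and let c be a (nonempty) ≈-equivalence class. Let R_{0,c} = {α ∈ R_0 : s_α(c) = c} and W_{0,c} the subgroup of the Weyl group generated by {s_α : α ∈ R_{0,c}}. Let Y″ = Y − ∪_{N∈ℤ∖{0}, α∈R_{N mod m}} { y : (y,α) = N }. Then there exists y_c ∈ c ∩ Y″ with w(y_c) = y_c for all w ∈ W_{0,c}; in particular (y_c,α) = 0 for all α ∈ R_{0,c}. -/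

import Mathlib

open scoped Classical

noncomputable section

/-- A root system: finite-dimensional `ℚ`-vector spaces `Y`, `X` with a perfect
pairing, a finite set of roots `R ⊆ X` with coroots `α ↦ α∨ ∈ Y`, satisfying the
usual axioms (in particular `R = -R` and the reflections preserve `R`). -/
structure RootSystemQ (Y : Type*) (X : Type*) [AddCommGroup Y] [Module ℚ Y]
    [AddCommGroup X] [Module ℚ X] where
  pair : Y →ₗ[ℚ] X →ₗ[ℚ] ℚ
  R : Finset X
  coroot : X → Y
  finY : FiniteDimensional ℚ Y
  finX : FiniteDimensional ℚ X
  nondeg_left : ∀ y : Y, (∀ x : X, pair y x = 0) → y = 0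
  nondeg_right : ∀ x : X, (∀ y : Y, pair y x = 0) → x = 0
  root_ne_zero : ∀ α ∈ R, α ≠ (0 : X)
  neg_mem : ∀ α ∈ R, -α ∈ R
  coroot_neg : ∀ α ∈ R, coroot (-α) = -coroot α
  pair_coroot_self : ∀ α ∈ R, pair (coroot α) α = 2
  reflect_mem : ∀ α ∈ R, ∀ β ∈ R, β - pair (coroot α) β • α ∈ R

/-- A `ℤ/m`-grading of a root system, encoded by a grading function
`grade : X → ZMod m`; the graded piece `R_j` is `{α ∈ R | grade α = j}`.
The axioms say: if `α + α' ∈ R` then `α + α'` has grade `j + j'`, and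
`-α` has grade `-j` (i.e. `α + α' = 0` forces `j + j' = 0`). -/
structure ZModGrading {Y X : Type*} [AddCommGroup Y] [Module ℚ Y]
    [AddCommGroup X] [Module ℚ X] (m : ℕ) (P : RootSystemQ Y X) where
  grade : X → ZMod m
  grade_add : ∀ α ∈ P.R, ∀ β ∈ P.R, α + β ∈ P.R → grade (α + β) = grade α + grade β
  grade_neg : ∀ α ∈ P.R, grade (-α) = -grade α

variable {Y X : Type*} [AddCommGroup Y] [Module ℚ Y] [AddCommGroup X] [Module ℚ X]

/-- The coarse (`≈`-) equivalence class of `y₀`: all `y` with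
`((y,α)−1)((y₀,α)−1) > 0` for every `α ∈ R₁`. -/
def classOf (m : ℕ) (P : RootSystemQ Y X) (G : ZModGrading m P) (y₀ : Y) : Set Y :=
  {y | ∀ α ∈ P.R, G.grade α = 1 → 0 < (P.pair y α - 1) * (P.pair y₀ α - 1)}

/-- The subgroup `W_{0,c}` of the Weyl group (acting on `Y`) generated by the
reflections `s_α`, `α ∈ R₀`, which keep the class `c = classOf y₀` stable. -/
def W0cY (m : ℕ) (P : RootSystemQ Y X) (G : ZModGrading m P) (y₀ : Y) :
    Subgroup (Y ≃ₗ[ℚ] Y) :=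
  Subgroup.closure {u | ∃ α ∈ P.R, G.grade α = 0 ∧
    ((fun y : Y => y - P.pair y α • P.coroot α) '' classOf m P G y₀ = classOf m P G y₀) ∧
    ∀ y : Y, u y = y - P.pair y α • P.coroot α}

-- aux definitions for the proof of statement18

/-- The X-side reflection `s_α` as a permutation of the (sub)type of roots. -/
def reflPerm (P : RootSystemQ Y X) (α : X) (hα : α ∈ P.R) :
    Equiv.Perm {β : X // β ∈ P.R} where
  toFun β := ⟨(β : X) - P.pair (P.coroot α) (β : X) • α, P.reflect_mem α hα β β.2⟩
  invFun β := ⟨(β : X) - P.pair (P.coroot α) (β : X) • α, P.reflect_mem α hα β β.2⟩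
  left_inv β := by
    apply Subtype.ext
    have h2 : P.pair (P.coroot α) α = 2 := P.pair_coroot_self α hα
    simp only [map_sub, map_smul, smul_eq_mul, h2]
    module
  right_inv β := by
    apply Subtype.ext
    have h2 : P.pair (P.coroot α) α = 2 := P.pair_coroot_self α hα
    simp only [map_sub, map_smul, smul_eq_mul, h2]
    module

lemma reflPerm_apply (P : RootSystemQ Y X) (α : X) (hα : α ∈ P.R) (β : {β : X // β ∈ P.R}) :
    (reflPerm P α hα β : X) = (β : X) - P.pair (P.coroot α) (β : X) • α := rfl

lemma reflPerm_inv (P : RootSystemQ Y X) (α : X) (hα : α ∈ P.R) :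
    (reflPerm P α hα)⁻¹ = reflPerm P α hα :=
  Equiv.ext fun _ => rfl

/-- Negation on the subtype of roots. -/
def negR (P : RootSystemQ Y X) (β : {β : X // β ∈ P.R}) : {β : X // β ∈ P.R} :=
  ⟨-(β : X), P.neg_mem β β.2⟩

set_option maxHeartbeats 2000000 in
/-- cf. A.2 of the paper: every coarse equivalence class `c`
contains a point `y_c ∈ Y″` fixed by `W_{0,c}`; in particular `(y_c,α) = 0` for
every `α ∈ R_{0,c}`. -/
theorem statement18 (m : ℕ) (hm : 0 < m) (P : RootSystemQ Y X) (G : ZModGrading m P)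
    (y₀ : Y) (hy₀ : ∀ α ∈ P.R, G.grade α = 1 → P.pair y₀ α ≠ 1) :
    ∃ yc : Y,
      yc ∈ classOf m P G y₀ ∧
      (∀ α ∈ P.R, ∀ N : ℤ, N ≠ 0 → (N : ZMod m) = G.grade α → P.pair yc α ≠ (N : ℚ)) ∧
      (∀ u ∈ W0cY m P G y₀, u yc = yc) ∧
      (∀ α ∈ P.R, G.grade α = 0 →
        ((fun y : Y => y - P.pair y α • P.coroot α) '' classOf m P G y₀ = classOf m P G y₀) →
        P.pair yc α = 0) := by
  classical
  have hy₀c : y₀ ∈ classOf m P G y₀ := by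
    intro α hα h1
    exact mul_self_pos.mpr (sub_ne_zero.mpr (hy₀ α hα h1))
  -- the generating set of permutations of roots
  set T : Set (Equiv.Perm {β : X // β ∈ P.R}) :=
    {g | ∃ α, ∃ hα : α ∈ P.R, G.grade α = 0 ∧
      ((fun y : Y => y - P.pair y α • P.coroot α) '' classOf m P G y₀ = classOf m P G y₀) ∧
      g = reflPerm P α hα} with hT
  set Gs : Subgroup (Equiv.Perm {β : X // β ∈ P.R}) := Subgroup.closure T with hGs
  -- all elements of Gs commute with negation
  have hodd : ∀ g ∈ Gs, ∀ β, g (negR P β) = negR P (g β) := by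
    intro g hg
    refine Subgroup.closure_induction ?_ ?_ ?_ ?_ hg
    · rintro g ⟨α, hα, h0, him, rfl⟩ β
      apply Subtype.ext
      show (-(β:X)) - P.pair (P.coroot α) (-(β:X)) • α = -((β:X) - P.pair (P.coroot α) (β:X) • α)
      rw [map_neg]
      module
    · intro β; rfl
    · intro g h _ _ pg ph β
      have : (g * h) (negR P β) = g (h (negR P β)) := rfl
      rw [this, ph, pg]; rfl
    · intro g _ pg β
      apply g.injective
      rw [Equiv.Perm.coe_inv, Equiv.apply_symm_apply, pg, Equiv.apply_symm_apply]
  -- transport points of the class along elements of Gs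
  have hrel : ∀ g ∈ Gs,
      (∀ y ∈ classOf m P G y₀, ∃ y' ∈ classOf m P G y₀, ∀ β : {β : X // β ∈ P.R},
        P.pair y' (β : X) = P.pair y ((g β : {β : X // β ∈ P.R}) : X)) ∧
      (∀ y ∈ classOf m P G y₀, ∃ y' ∈ classOf m P G y₀, ∀ β : {β : X // β ∈ P.R},
        P.pair y' (β : X) = P.pair y ((g⁻¹ β : {β : X // β ∈ P.R}) : X)) := by
    intro g hg
    refine Subgroup.closure_induction ?_ ?_ ?_ ?_ hg
    · rintro g ⟨α, hα, h0, him, rfl⟩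
      have base : ∀ y ∈ classOf m P G y₀, ∃ y' ∈ classOf m P G y₀,
          ∀ β : {β : X // β ∈ P.R},
            P.pair y' (β : X) = P.pair y ((reflPerm P α hα β : {β : X // β ∈ P.R}) : X) := by
        intro y hy
        refine ⟨y - P.pair y α • P.coroot α, ?_, ?_⟩
        · rw [← him]; exact Set.mem_image_of_mem _ hy
        · intro β
          rw [reflPerm_apply]
          simp only [map_sub, map_smul, LinearMap.sub_apply, LinearMap.smul_apply, smul_eq_mul]
          ring
      exact ⟨base, by rw [reflPerm_inv]; exact base⟩
    · constructor <;>
        · intro y hy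
          exact ⟨y, hy, fun β => by simp⟩
    · intro g h _ _ pg ph
      constructor
      · intro y hy
        obtain ⟨y₁, hy₁, hp₁⟩ := pg.1 y hy
        obtain ⟨y₂, hy₂, hp₂⟩ := ph.1 y₁ hy₁
        refine ⟨y₂, hy₂, fun β => ?_⟩
        rw [hp₂ β, hp₁ (h β)]; rfl
      · intro y hy
        obtain ⟨y₁, hy₁, hp₁⟩ := ph.2 y hy
        obtain ⟨y₂, hy₂, hp₂⟩ := pg.2 y₁ hy₁
        refine ⟨y₂, hy₂, fun β => ?_⟩
        rw [hp₂ β, hp₁ (g⁻¹ β), mul_inv_rev]; rfl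
    · intro g _ pg
      exact ⟨pg.2, by rw [inv_inv]; exact pg.1⟩
  haveI : Fintype {β : X // β ∈ P.R} := FinsetCoe.fintype P.R
  haveI : Fintype ↥Gs := Fintype.ofFinite _
  haveI : Nonempty ↥Gs := ⟨1⟩
  have hpt : ∀ g : ↥Gs, ∃ y', y' ∈ classOf m P G y₀ ∧ ∀ β : {β : X // β ∈ P.R},
      P.pair y' (β : X) = P.pair y₀ (((g : Equiv.Perm {β : X // β ∈ P.R}) β :
        {β : X // β ∈ P.R}) : X) := by
    intro g
    obtain ⟨y', hy', hp⟩ := (hrel g g.2).1 y₀ hy₀c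
    exact ⟨y', hy', hp⟩
  choose f hfc hfp using hpt
  set n := Fintype.card ↥Gs with hn
  have hn0 : 0 < n := Fintype.card_pos
  have hnQ : (0:ℚ) < (n:ℚ) := by exact_mod_cast hn0
  set ybar : Y := (n : ℚ)⁻¹ • ∑ g : ↥Gs, f g with hybar
  have hpairbar : ∀ x : X, P.pair ybar x = (n:ℚ)⁻¹ * ∑ g : ↥Gs, P.pair (f g) x := by
    intro x
    rw [hybar, map_smul, map_sum]
    simp
  -- ybar lies in the class
  have hybarc : ybar ∈ classOf m P G y₀ := by
    intro α hα h1
    have ht : P.pair y₀ α - 1 ≠ 0 := sub_ne_zero.mpr (hy₀ α hα h1)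
    have hsum := hpairbar α
    have hone : ∑ _g : ↥Gs, (1:ℚ) = (n:ℚ) := by
      simp [Finset.card_univ, hn]
    rcases ht.lt_or_gt with htneg | htpos
    · have hlt : ∀ g : ↥Gs, P.pair (f g) α < 1 := by
        intro g
        have h := hfc g α hα h1
        nlinarith
      have hS : ∑ g : ↥Gs, P.pair (f g) α < (n:ℚ) := by
        rw [← hone]
        exact Finset.sum_lt_sum_of_nonempty Finset.univ_nonempty fun g _ => hlt g
      have hbv : P.pair ybar α < 1 := by
        rw [hsum]
        calc (n:ℚ)⁻¹ * ∑ g : ↥Gs, P.pair (f g) α < (n:ℚ)⁻¹ * (n:ℚ) :=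
              mul_lt_mul_of_pos_left hS (inv_pos.mpr hnQ)
          _ = 1 := inv_mul_cancel₀ (ne_of_gt hnQ)
      exact mul_pos_of_neg_of_neg (by linarith) htneg
    · have hlt : ∀ g : ↥Gs, 1 < P.pair (f g) α := by
        intro g
        have h := hfc g α hα h1
        nlinarith
      have hS : (n:ℚ) < ∑ g : ↥Gs, P.pair (f g) α := by
        rw [← hone]
        exact Finset.sum_lt_sum_of_nonempty Finset.univ_nonempty fun g _ => hlt g
      have hbv : 1 < P.pair ybar α := by
        rw [hsum]
        calc (1:ℚ) = (n:ℚ)⁻¹ * (n:ℚ) := (inv_mul_cancel₀ (ne_of_gt hnQ)).symm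
          _ < (n:ℚ)⁻¹ * ∑ g : ↥Gs, P.pair (f g) α :=
              mul_lt_mul_of_pos_left hS (inv_pos.mpr hnQ)
      exact mul_pos (by linarith) htpos
  -- ybar pairs to zero with the relevant grade-0 roots
  have hzero : ∀ (α : X), ∀ hα : α ∈ P.R, G.grade α = 0 →
      ((fun y : Y => y - P.pair y α • P.coroot α) '' classOf m P G y₀ = classOf m P G y₀) →
      P.pair ybar α = 0 := by
    intro α hα h0 him
    have hσG : reflPerm P α hα ∈ Gs := Subgroup.subset_closure ⟨α, hα, h0, him, rfl⟩
    set σ : ↥Gs := ⟨reflPerm P α hα, hσG⟩ with hσ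
    have hσα : reflPerm P α hα ⟨α, hα⟩ = negR P ⟨α, hα⟩ := by
      apply Subtype.ext
      show α - P.pair (P.coroot α) α • α = -α
      rw [P.pair_coroot_self α hα]
      module
    set F : ↥Gs → ℚ := fun g =>
      P.pair y₀ (((g : Equiv.Perm {β : X // β ∈ P.R}) ⟨α, hα⟩ : {β : X // β ∈ P.R}) : X) with hF
    have h2 : ∑ g : ↥Gs, F g = ∑ g : ↥Gs, F (g * σ) :=
      (Fintype.sum_equiv (Equiv.mulRight σ) (fun g => F (g * σ)) F fun g => rfl).symm
    have h3 : ∀ g : ↥Gs, F (g * σ) = - F g := by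
      intro g
      have hc : ((g * σ : ↥Gs) : Equiv.Perm {β : X // β ∈ P.R}) ⟨α, hα⟩ =
          (g : Equiv.Perm {β : X // β ∈ P.R}) (reflPerm P α hα ⟨α, hα⟩) := rfl
      rw [hF]
      simp only [hc, hσα, hodd (g : Equiv.Perm {β : X // β ∈ P.R}) g.2]
      show P.pair y₀ (-(((g : Equiv.Perm {β : X // β ∈ P.R}) ⟨α, hα⟩ :
        {β : X // β ∈ P.R}) : X)) = _
      rw [map_neg]
    have h4 : ∑ g : ↥Gs, F g = 0 := by
      have := h2
      simp only [h3] at this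
      rw [Finset.sum_neg_distrib] at this
      linarith
    rw [hpairbar α]
    have h5 : ∑ g : ↥Gs, P.pair (f g) α = ∑ g : ↥Gs, F g :=
      Finset.sum_congr rfl fun g _ => hfp g ⟨α, hα⟩
    rw [h5, h4, mul_zero]
  obtain ⟨yb, hybc, hzb⟩ : ∃ yb : Y, yb ∈ classOf m P G y₀ ∧ ∀ (α : X), α ∈ P.R →
      G.grade α = 0 →
      ((fun y : Y => y - P.pair y α • P.coroot α) '' classOf m P G y₀ = classOf m P G y₀) →
      P.pair yb α = 0 := ⟨ybar, hybarc, hzero⟩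
  clear hpairbar hybarc hzero hybar hfp hfc hodd hrel hy₀c
  -- choose a large prime q and scale by (q+1)/q
  set Cf : X → ℚ := fun α =>
    (|((P.pair yb α)).num| : ℚ) + (if (P.pair yb α) < 1 then max ((P.pair yb α) / (1 - (P.pair yb α))) 0 else 0) with hCf
  have hCf0 : ∀ α, 0 ≤ Cf α := by
    intro α
    apply add_nonneg
    · positivity
    · split_ifs
      · exact le_max_right _ _
      · exact le_refl 0
  set C : ℚ := ∑ α ∈ P.R, Cf α with hC
  have hCbound : ∀ α ∈ P.R, Cf α ≤ C := fun α hα =>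
    Finset.single_le_sum (fun i _ => hCf0 i) hα
  obtain ⟨nC, hnC⟩ := exists_nat_ge C
  obtain ⟨q, hqn, hq⟩ := Nat.exists_infinite_primes (nC + 1)
  have hq0 : (0:ℚ) < (q:ℚ) := by exact_mod_cast hq.pos
  have hqC : C < (q:ℚ) := by
    have h1 : ((nC + 1 : ℕ) : ℚ) ≤ (q:ℚ) := by exact_mod_cast hqn
    push_cast at h1
    linarith
  set s : ℚ := 1 + (q:ℚ)⁻¹ with hs
  have hqi : (q:ℚ) * (q:ℚ)⁻¹ = 1 := mul_inv_cancel₀ (ne_of_gt hq0)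
  have hs1 : 1 < s := by
    rw [hs]
    have : (0:ℚ) < (q:ℚ)⁻¹ := inv_pos.mpr hq0
    linarith
  have hycpair : ∀ x : X, P.pair (s • yb) x = s * P.pair yb x := by
    intro x
    rw [map_smul]
    simp
  -- the key smallness bound
  have hsmall : ∀ α ∈ P.R, (P.pair yb α) < 1 → s * (P.pair yb α) < 1 := by
    intro α hα hb1
    have h1b : (0:ℚ) < 1 - (P.pair yb α) := by linarith
    have hle : (P.pair yb α) / (1 - (P.pair yb α)) ≤ C := by
      have := hCbound α hα
      rw [hCf] at this
      simp only [if_pos hb1] at this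
      have h2 : (P.pair yb α) / (1 - (P.pair yb α)) ≤ max ((P.pair yb α) / (1 - (P.pair yb α))) 0 := le_max_left _ _
      have h3 : (0:ℚ) ≤ (|((P.pair yb α)).num| : ℚ) := by positivity
      linarith
    have hkey : (P.pair yb α) < (q:ℚ) * (1 - (P.pair yb α)) := by
      have : (P.pair yb α) / (1 - (P.pair yb α)) < (q:ℚ) := lt_of_le_of_lt hle hqC
      calc (P.pair yb α) = ((P.pair yb α) / (1 - (P.pair yb α))) * (1 - (P.pair yb α)) := by field_simp
        _ < (q:ℚ) * (1 - (P.pair yb α)) := by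
            exact mul_lt_mul_of_pos_right this h1b
    have h7 : s * (P.pair yb α) * (q:ℚ) = (P.pair yb α) * (q:ℚ) + (P.pair yb α) := by
      rw [hs]; field_simp
    have h8 : s * (P.pair yb α) * (q:ℚ) < (q:ℚ) := by nlinarith [hkey]
    nlinarith [hq0]
  have h4 : ∀ α ∈ P.R, G.grade α = 0 →
      ((fun y : Y => y - P.pair y α • P.coroot α) '' classOf m P G y₀ = classOf m P G y₀) →
      P.pair (s • yb) α = 0 := by
    intro α hα h0 him
    rw [hycpair]
    have : (P.pair yb α) = 0 := hzb α hα h0 him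
    rw [this, mul_zero]
  refine ⟨s • yb, ?_, ?_, ?_, h4⟩
  · -- membership in the class
    intro α hα h1
    have hy := hybc α hα h1
    have ht : P.pair y₀ α - 1 ≠ 0 := sub_ne_zero.mpr (hy₀ α hα h1)
    rw [hycpair]
    rcases ht.lt_or_gt with htneg | htpos
    · have hb1 : (P.pair yb α) < 1 := by nlinarith
      have := hsmall α hα hb1
      exact mul_pos_of_neg_of_neg (by linarith) htneg
    · have hb1 : 1 < (P.pair yb α) := by nlinarith
      have hsb : 1 < s * (P.pair yb α) := by nlinarith
      exact mul_pos (by linarith) htpos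
  · -- avoiding the hyperplanes
    intro α hα N hN _hmod
    rw [hycpair]
    intro heq
    by_cases hb0 : (P.pair yb α) = 0
    · rw [hb0, mul_zero] at heq
      exact hN (by exact_mod_cast heq.symm)
    · have hden : (((P.pair yb α)).den : ℚ) ≠ 0 := by
        exact_mod_cast ((P.pair yb α)).den_nz
      have hbpr : (P.pair yb α) * (((P.pair yb α)).den : ℚ) = (((P.pair yb α)).num : ℚ) := by
        exact_mod_cast Rat.mul_den_eq_num (P.pair yb α)
      have hsq : s * (q:ℚ) = (q:ℚ) + 1 := by
        rw [hs]; field_simp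
      have key : ((q:ℚ) + 1) * (((P.pair yb α)).num : ℚ) = (N:ℚ) * ((q:ℚ) * (((P.pair yb α)).den : ℚ)) := by
        calc ((q:ℚ) + 1) * (((P.pair yb α)).num : ℚ) = (s * (q:ℚ)) * ((P.pair yb α) * (((P.pair yb α)).den : ℚ)) := by
              rw [hsq, hbpr]
          _ = (s * (P.pair yb α)) * ((q:ℚ) * (((P.pair yb α)).den : ℚ)) := by ring
          _ = (N:ℚ) * ((q:ℚ) * (((P.pair yb α)).den : ℚ)) := by rw [heq]
      have keyZ : ((q:ℤ) + 1) * ((P.pair yb α)).num = N * ((q:ℤ) * (((P.pair yb α)).den : ℤ)) := by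
        exact_mod_cast key
      have hdvd : (q:ℤ) ∣ ((q:ℤ) + 1) * ((P.pair yb α)).num :=
        ⟨N * (((P.pair yb α)).den : ℤ), by rw [keyZ]; ring⟩
      have hqZ : Prime (q:ℤ) := Nat.prime_iff_prime_int.mp hq
      rcases hqZ.dvd_mul.mp hdvd with h | h
      · have h1 : (q:ℤ) ∣ 1 := by
          have := dvd_sub h (dvd_refl (q:ℤ))
          simpa using this
        have h2 : (q:ℤ) ≤ 1 := Int.le_of_dvd one_pos h1
        have : (1:ℤ) < (q:ℤ) := by exact_mod_cast hq.one_lt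
        linarith
      · have hnum0 : ((P.pair yb α)).num ≠ 0 := Rat.num_ne_zero.mpr hb0
        have hple : (q:ℤ) ≤ |((P.pair yb α)).num| :=
          Int.le_of_dvd (abs_pos.mpr hnum0) ((dvd_abs _ _).mpr h)
        have hcb : (|((P.pair yb α)).num| : ℚ) ≤ C := by
          have h5 := hCbound α hα
          rw [hCf] at h5
          have h6 : (0:ℚ) ≤ (if (P.pair yb α) < 1 then max ((P.pair yb α) / (1 - (P.pair yb α))) 0 else 0) := by
            split_ifs
            · exact le_max_right _ _
            · exact le_refl 0
          linarith
        have : (q:ℚ) ≤ (|((P.pair yb α)).num| : ℚ) := by exact_mod_cast hple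
        linarith
  · -- fixed by W0c
    intro u hu
    refine Subgroup.closure_induction ?_ ?_ ?_ ?_ hu
    · rintro u ⟨α, hα, h0, him, hform⟩
      rw [hform (s • yb), h4 α hα h0 him]
      simp
    · rfl
    · intro u v _ _ pu pv
      have : (u * v) (s • yb) = u (v (s • yb)) := rfl
      rw [this, pv, pu]
    · intro u _ pu
      have h := congrArg u.symm pu
      rw [u.symm_apply_apply] at h
      exact h.symm
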